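/- Let A be an associative unital ring, let h be a central element of A, let m ≥ 1, and let l : Fin m → Fin m → A be elements satisfying the gl(m)_h commutation relations l_i^j l_k^s − l_k^s l_i^j = h(l_i^s δ_k^j − l_k^j δ_i^s) for all i, j, k, s. Define the m×m matrices Λ_i^j := l_i^j · I_m + h · E_{ij} in Mat_m(A), where E_{ij} is the matrix unit with 1 in position (i,j) and 0 elsewhere. Then the matrices Λ_i^j satisfy the same gl(m)_h relations: Λ_i^j Λ_k^s − Λ_k^s Λ_i^j = h(Λ_i^s δ_k^j − Λ_k^j δ_i^s) for all i, j, k, s. (Equivalently, the assignment l_i^j ↦ l_i^j I_m + h E_{ij} defines a representation of the algebra U(gl(m)_h) by m×m matrices over itself; this encodes the multiplicativity 𝔻(ab) = 𝔻(a)𝔻(b) of the matrix of shifted quantum partial derivatives.) -/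

import Mathlib

set_option maxRecDepth 8000
set_option maxHeartbeats 2000000

lemma glmh_sum_expand {A : Type*} [Ring A] {m : ℕ} (p q u v : A) (i j k s a b : Fin m) :
    ∑ x : Fin m, ((if a = x then p else 0) + if i = a ∧ j = x then u else 0) *
      ((if x = b then q else 0) + if k = x ∧ s = b then v else 0) =
    (if a = b then p * q else 0) + (if k = a ∧ s = b then p * v else 0) +
      ((if i = a ∧ j = b then u * q else 0) +
        if i = a ∧ j = k ∧ s = b then u * v else 0) := by
  simp only [add_mul, mul_add, Finset.sum_add_distrib, ite_mul, mul_ite, zero_mul, mul_zero,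
    ite_and, Finset.sum_ite_eq, Finset.sum_ite_eq', Finset.mem_univ, if_true]
  split_ifs <;> subst_vars <;> first | (exact absurd rfl (by assumption)) | abel



/-- The assignment `l i j ↦ l i j • I + h • E i j` preserves the `gl(m)_h`
commutation relations: this encodes the multiplicativity `𝔻(ab) = 𝔻(a)𝔻(b)` of the
matrix of shifted quantum partial derivatives on `U(gl(m)_h)`. -/
theorem glmh_matrix_representation
    {A : Type*} [Ring A] (h : A) (hcentral : ∀ a : A, h * a = a * h)
    (m : ℕ) (hm : 1 ≤ m) (l : Fin m → Fin m → A)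
    (hrel : ∀ i j k s : Fin m,
      l i j * l k s - l k s * l i j =
        h * ((if k = j then l i s else 0) - (if i = s then l k j else 0)))
    (Λ : Fin m → Fin m → Matrix (Fin m) (Fin m) A)
    (hΛ : ∀ i j : Fin m,
      Λ i j = l i j • (1 : Matrix (Fin m) (Fin m) A) + Matrix.single i j h) :
    ∀ i j k s : Fin m,
      Λ i j * Λ k s - Λ k s * Λ i j =
        h • ((if k = j then Λ i s else 0) - (if i = s then Λ k j else 0)) := by
  intro i j k s
  have key := hrel i j k s
  have key2 : l i j * l k s =
      l k s * l i j + ((if k = j then l i s else 0) - (if i = s then l k j else 0)) * h := by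
    rw [← hcentral]
    rw [sub_eq_iff_eq_add] at key
    rw [key]; abel
  ext a b
  simp only [hΛ, Matrix.sub_apply, Matrix.smul_apply, Matrix.add_apply, Matrix.mul_apply,
    Matrix.one_apply, Matrix.single, Matrix.of_apply, smul_eq_mul, mul_ite, ite_mul,
    mul_zero, zero_mul, mul_one, one_mul, Matrix.zero_apply,
    apply_ite (fun M : Matrix (Fin m) (Fin m) A => M a b)]
  rw [glmh_sum_expand, glmh_sum_expand, key2]
  simp only [hcentral, sub_mul, add_mul, ite_mul, zero_mul, mul_one, one_mul, ite_and]
  split_ifs <;> subst_vars <;> first | (exact absurd rfl (by assumption)) | abel
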